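/- arXiv:0912.3989 — 7 statements merged into one kernel-verified Lean document; each statement's English description precedes it below -/
import Mathlib

section
/- Let Ω be an N×N real diagonal matrix with positive diagonal entries. Let A be an N×N real matrix that is Ω-antisymmetric (AᵀΩ + ΩA = 0) and null-row (A·𝟙 = 0), and let F be an N×N real matrix that is antisymmetric (Fᵀ = −F) and null-row (F·𝟙 = 0). Define the discrete Lie derivative L_A F = ι_A(dF) + d(ι_A F), where (dF)_{ikj} = F_{ik} + F_{kj} + F_{ji}, (ι_A dF)_{ij} = Σ_k ((dF)_{ikj} A_{ik} − (dF)_{jki} A_{jk}), (ι_A F)_i = (AFᵀ)_{ii}, and (dφ)_{ij} = φ_j − φ_i for a vector φ. Then L_A F = [A, FΩ]Ω⁻¹ = AF − (AF)ᵀ. -/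
open Matrix BigOperators

/-- **Discrete Lie derivative formula.** For an `Ω`-antisymmetric null-row matrix `A`
(a discrete divergence-free vector field) and an antisymmetric null-row matrix `F`
(a discrete one-form), the discrete Lie derivative defined via Cartan's formula
`L_A F = ι_A(dF) + d(ι_A F)` equals `[A, FΩ]Ω⁻¹ = AF − (AF)ᵀ`. -/
theorem discrete_lie_derivative_formula (N : ℕ) (d : Fin N → ℝ) (hd : ∀ i, 0 < d i)
    (A F : Matrix (Fin N) (Fin N) ℝ)
    (hAΩ : Aᵀ * Matrix.diagonal d + Matrix.diagonal d * A = 0)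
    (hA1 : A *ᵥ (1 : Fin N → ℝ) = 0)
    (hF : Fᵀ = -F)
    (hF1 : F *ᵥ (1 : Fin N → ℝ) = 0) :
    (Matrix.of fun i j =>
        -- ι_A (dF) with (dF)_{ikj} = F_{ik} + F_{kj} + F_{ji}
        (∑ k, ((F i k + F k j + F j i) * A i k - (F j k + F k i + F i j) * A j k))
        -- + d(ι_A F) with (ι_A F)_i = (AFᵀ)_{ii}
        + ((A * Fᵀ) j j - (A * Fᵀ) i i))
      = (A * (F * Matrix.diagonal d) - (F * Matrix.diagonal d) * A)
          * (Matrix.diagonal d)⁻¹ ∧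
    (Matrix.of fun i j =>
        (∑ k, ((F i k + F k j + F j i) * A i k - (F j k + F k i + F i j) * A j k))
        + ((A * Fᵀ) j j - (A * Fᵀ) i i))
      = A * F - (A * F)ᵀ := by
  have hA0 : ∀ i, ∑ k, A i k = 0 := by
    intro i
    have := congrFun hA1 i
    simpa [Matrix.mulVec, dotProduct] using this
  have h2 : (Matrix.of fun i j =>
        (∑ k, ((F i k + F k j + F j i) * A i k - (F j k + F k i + F i j) * A j k))
        + ((A * Fᵀ) j j - (A * Fᵀ) i i))
      = A * F - (A * F)ᵀ := by
    ext i j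
    have hi := hA0 i
    have hj := hA0 j
    simp only [Matrix.of_apply, Matrix.sub_apply, Matrix.transpose_apply, Matrix.mul_apply]
    have e1 : ∑ k, ((F i k + F k j + F j i) * A i k - (F j k + F k i + F i j) * A j k)
        = ((∑ k, A i k * F i k) + (∑ k, A i k * F k j) + F j i * (∑ k, A i k))
          - ((∑ k, A j k * F j k) + (∑ k, A j k * F k i) + F i j * (∑ k, A j k)) := by
      simp only [Finset.mul_sum]
      rw [← Finset.sum_add_distrib, ← Finset.sum_add_distrib, ← Finset.sum_add_distrib,
        ← Finset.sum_add_distrib, ← Finset.sum_sub_distrib]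
      exact Finset.sum_congr rfl fun k _ => by ring
    rw [e1, hi, hj]
    ring
  refine ⟨?_, h2⟩
  rw [h2]
  -- show A*F - (A*F)ᵀ = (A*(F*Ω) - (F*Ω)*A) * Ω⁻¹
  have hdet : IsUnit (Matrix.diagonal d).det := by
    simp only [Matrix.det_diagonal]
    exact (Finset.prod_pos (fun i _ => hd i)).ne'.isUnit
  have hΩinv : Matrix.diagonal d * (Matrix.diagonal d)⁻¹ = 1 :=
    Matrix.mul_nonsing_inv _ hdet
  have hAT : Aᵀ = -(Matrix.diagonal d * A * (Matrix.diagonal d)⁻¹) := by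
    have h : Aᵀ * Matrix.diagonal d = -(Matrix.diagonal d * A) :=
      eq_neg_of_add_eq_zero_left hAΩ
    calc Aᵀ = Aᵀ * (Matrix.diagonal d * (Matrix.diagonal d)⁻¹) := by rw [hΩinv, mul_one]
      _ = (Aᵀ * Matrix.diagonal d) * (Matrix.diagonal d)⁻¹ := by rw [mul_assoc]
      _ = -(Matrix.diagonal d * A * (Matrix.diagonal d)⁻¹) := by rw [h, neg_mul]
  have hAFT : (A * F)ᵀ = F * Matrix.diagonal d * A * (Matrix.diagonal d)⁻¹ := by
    rw [Matrix.transpose_mul, hF, hAT]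
    simp [mul_assoc]
  rw [hAFT, sub_mul]
  congr 1
  rw [mul_assoc, mul_assoc, hΩinv, mul_one]
end

section
/- Let Ω be an N×N real diagonal matrix with positive diagonal entries. Let F be a 3-tensor F : {1,…,N}³ → ℝ that is totally antisymmetric (antisymmetric under interchange of any two indices), let A be any N×N real matrix, and let B be an Ω-antisymmetric N×N real matrix (BᵀΩ + ΩB = 0). Define the contraction (ι_A F)_{ij} = Σ_k (F_{ikj} A_{ik} − F_{jki} A_{jk}), the pairing ⟨⟨G, B⟩⟩ = Tr(Ω B Gᵀ) for matrices G, and the total pairing ⟨⟨F, A, B⟩⟩ = 2 Σ_{i,j,k} Ω_i F_{ijk} A_{ij} B_{ik}. Then ⟨⟨ι_A F, B⟩⟩ = ⟨⟨F, A, B⟩⟩. -/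
open Matrix BigOperators

/-- **Contraction–pairing compatibility.** For a totally antisymmetric 3-tensor `F`
(a discrete 2-form), any matrix `A` and an `Ω`-antisymmetric matrix `B`, the pairing
of the contraction `ι_A F` with `B` equals the total pairing of `F` with `A` and `B`:
`⟨⟨ι_A F, B⟩⟩ = ⟨⟨F, A, B⟩⟩`. -/
theorem contraction_pairing (N : ℕ) (d : Fin N → ℝ) (hd : ∀ i, 0 < d i)
    (F : Fin N → Fin N → Fin N → ℝ)
    (hF12 : ∀ i j k, F i j k = -F j i k)
    (hF23 : ∀ i j k, F i j k = -F i k j)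
    (hF13 : ∀ i j k, F i j k = -F k j i)
    (A B : Matrix (Fin N) (Fin N) ℝ)
    (hB : Bᵀ * Matrix.diagonal d + Matrix.diagonal d * B = 0) :
    Matrix.trace
        (Matrix.diagonal d * B *
          (Matrix.of fun i j => ∑ k, (F i k j * A i k - F j k i * A j k))ᵀ)
      = 2 * ∑ i, ∑ j, ∑ k, d i * F i j k * A i j * B i k := by
  have hB' : ∀ i j, d i * B i j = -(d j * B j i) := by
    intro i j
    have h := congrFun (congrFun hB i) j
    simp [Matrix.add_apply, Matrix.mul_apply, Matrix.diagonal_apply, Matrix.transpose_apply,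
      Finset.sum_ite_eq, Finset.sum_ite_eq', mul_comm] at h
    linarith
  have e1 : Matrix.trace
        (Matrix.diagonal d * B *
          (Matrix.of fun i j => ∑ k, (F i k j * A i k - F j k i * A j k))ᵀ)
      = ∑ i, ∑ j, ∑ k, d i * B i j * (F i k j * A i k - F j k i * A j k) := by
    simp only [Matrix.trace, Matrix.diag, Matrix.mul_apply, Matrix.transpose_apply,
      Matrix.of_apply, Matrix.diagonal_apply, ite_mul, zero_mul, Finset.sum_ite_eq,
      Finset.mem_univ, if_true, Finset.mul_sum]
  rw [e1]
  have split : ∀ i j : Fin N, ∑ k, d i * B i j * (F i k j * A i k - F j k i * A j k)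
      = (∑ k, d i * B i j * (F i k j * A i k)) - ∑ k, d i * B i j * (F j k i * A j k) := by
    intro i j
    rw [← Finset.sum_sub_distrib]
    exact Finset.sum_congr rfl fun k _ => by ring
  have T1 : (∑ i, ∑ j, ∑ k, d i * B i j * (F i k j * A i k))
      = ∑ i, ∑ j, ∑ k, d i * F i j k * A i j * B i k := by
    refine Finset.sum_congr rfl fun i _ => ?_
    rw [Finset.sum_comm]
    exact Finset.sum_congr rfl fun j _ => Finset.sum_congr rfl fun k _ => by ring
  have T2 : (∑ i, ∑ j, ∑ k, d i * B i j * (F j k i * A j k))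
      = -(∑ i, ∑ j, ∑ k, d i * B i j * (F i k j * A i k)) := by
    calc (∑ i, ∑ j, ∑ k, d i * B i j * (F j k i * A j k))
        = ∑ i, ∑ j, ∑ k, -(d j * B j i * (F j k i * A j k)) := by
          refine Finset.sum_congr rfl fun i _ => Finset.sum_congr rfl fun j _ =>
            Finset.sum_congr rfl fun k _ => ?_
          rw [hB']; ring
      _ = -(∑ i, ∑ j, ∑ k, d j * B j i * (F j k i * A j k)) := by
          simp [Finset.sum_neg_distrib]
      _ = -(∑ i, ∑ j, ∑ k, d i * B i j * (F i k j * A i k)) := by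
          rw [Finset.sum_comm]
  simp only [split, Finset.sum_sub_distrib]
  rw [T2, T1]
  ring
end

section
/- Let Ω be an N×N real diagonal matrix with positive diagonal entries. Let F be an N×N real matrix that is antisymmetric (Fᵀ = −F) and null-row (F·𝟙 = 0), and let B and C be N×N real matrices that are each Ω-antisymmetric and null-row. Then ⟨⟨dF, B, C⟩⟩ = −⟨⟨F, [B,C]⟩⟩, where (dF)_{ijk} = F_{ij} + F_{jk} + F_{ki}, ⟨⟨dF, B, C⟩⟩ = 2 Σ_{i,j,k} Ω_i (dF)_{ijk} B_{ij} C_{ik}, [B,C] = BC − CB, and ⟨⟨F, [B,C]⟩⟩ = Tr(Ω [B,C] Fᵀ). -/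
open Matrix BigOperators

/-- **Key identity for the flat operator.** For an antisymmetric null-row matrix `F`
(a discrete one-form) and `Ω`-antisymmetric null-row matrices `B`, `C` (discrete
divergence-free vector fields), one has `⟨⟨dF, B, C⟩⟩ = −⟨⟨F, [B,C]⟩⟩`, the discrete
analogue of `∫ dv♭(u,w) = −∫ (v, [u,w])`. -/
theorem pairing_d_with_commutator (N : ℕ) (d : Fin N → ℝ) (hd : ∀ i, 0 < d i)
    (F B C : Matrix (Fin N) (Fin N) ℝ)
    (hF : Fᵀ = -F)
    (hF1 : F *ᵥ (1 : Fin N → ℝ) = 0)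
    (hBΩ : Bᵀ * Matrix.diagonal d + Matrix.diagonal d * B = 0)
    (hB1 : B *ᵥ (1 : Fin N → ℝ) = 0)
    (hCΩ : Cᵀ * Matrix.diagonal d + Matrix.diagonal d * C = 0)
    (hC1 : C *ᵥ (1 : Fin N → ℝ) = 0) :
    2 * ∑ i, ∑ j, ∑ k, d i * (F i j + F j k + F k i) * B i j * C i k
      = -Matrix.trace (Matrix.diagonal d * (B * C - C * B) * Fᵀ) := by
  -- pointwise hypotheses
  have hF' : ∀ i j, F j i = -F i j := by
    intro i j
    have h := congrFun (congrFun hF i) j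
    simpa [Matrix.transpose_apply] using h
  have hB' : ∀ i j, d i * B i j = -(d j * B j i) := by
    intro i j
    have h := congrFun (congrFun hBΩ j) i
    simp [Matrix.add_apply, Matrix.mul_diagonal, Matrix.diagonal_mul,
      Matrix.transpose_apply] at h
    linarith
  have hC' : ∀ i j, d i * C i j = -(d j * C j i) := by
    intro i j
    have h := congrFun (congrFun hCΩ j) i
    simp [Matrix.add_apply, Matrix.mul_diagonal, Matrix.diagonal_mul,
      Matrix.transpose_apply] at h
    linarith
  have hB1' : ∀ i, ∑ j, B i j = 0 := by
    intro i
    have h := congrFun hB1 i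
    simpa [Matrix.mulVec, dotProduct] using h
  have hC1' : ∀ i, ∑ j, C i j = 0 := by
    intro i
    have h := congrFun hC1 i
    simpa [Matrix.mulVec, dotProduct] using h
  -- define the key triple sums
  set T : ℝ := ∑ i, ∑ j, ∑ k, d i * (B i k * C k j) * F i j with hT
  set U : ℝ := ∑ i, ∑ j, ∑ k, d i * (C i k * B k j) * F i j with hU
  set S2 : ℝ := ∑ i, ∑ j, ∑ k, d i * F j k * B i j * C i k with hS2
  -- split the LHS sum
  have hsplit : (∑ i, ∑ j, ∑ k, d i * (F i j + F j k + F k i) * B i j * C i k)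
      = (∑ i, ∑ j, ∑ k, d i * F i j * B i j * C i k)
        + S2 + (∑ i, ∑ j, ∑ k, d i * F k i * B i j * C i k) := by
    rw [hS2]
    rw [← Finset.sum_add_distrib, ← Finset.sum_add_distrib]
    refine Finset.sum_congr rfl fun i _ => ?_
    rw [← Finset.sum_add_distrib, ← Finset.sum_add_distrib]
    refine Finset.sum_congr rfl fun j _ => ?_
    rw [← Finset.sum_add_distrib, ← Finset.sum_add_distrib]
    exact Finset.sum_congr rfl fun k _ => by ring
  have hS1 : (∑ i, ∑ j, ∑ k, d i * F i j * B i j * C i k) = 0 := by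
    refine Finset.sum_eq_zero fun i _ => Finset.sum_eq_zero fun j _ => ?_
    rw [← Finset.mul_sum]
    simp [hC1']
  have hS3 : (∑ i, ∑ j, ∑ k, d i * F k i * B i j * C i k) = 0 := by
    refine Finset.sum_eq_zero fun i _ => ?_
    have h : ∀ j : Fin N, (∑ k, d i * F k i * B i j * C i k)
        = B i j * (∑ k, d i * F k i * C i k) := by
      intro j
      rw [Finset.mul_sum]
      exact Finset.sum_congr rfl fun k _ => by ring
    simp_rw [h]
    rw [← Finset.sum_mul, hB1']
    ring
  -- S2 = -T
  have hS2T : S2 = -T := by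
    have e1 : S2 = ∑ j, ∑ i, ∑ k, -(d j * (B j i * C i k) * F j k) := by
      rw [hS2, Finset.sum_comm]
      exact Finset.sum_congr rfl fun j _ => Finset.sum_congr rfl fun i _ =>
        Finset.sum_congr rfl fun k _ => by linear_combination (F j k * C i k) * hB' i j
    have e2 : (∑ j, ∑ i, ∑ k, (d j * (B j i * C i k) * F j k)) = T := by
      rw [hT]
      refine Finset.sum_congr rfl fun j _ => ?_
      rw [Finset.sum_comm]
    rw [e1]
    simp only [Finset.sum_neg_distrib]
    rw [e2]
  -- U = S2
  have hUS2 : U = S2 := by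
    have step : ∀ i j k : Fin N, d i * (C i k * B k j) * F i j
        = d k * F j i * B k j * C k i := by
      intro i j k
      linear_combination (B k j * F i j) * hC' i k - (d k * B k j * C k i) * hF' j i
    calc U = ∑ i, ∑ j, ∑ k, d k * F j i * B k j * C k i := by
          rw [hU]
          exact Finset.sum_congr rfl fun i _ => Finset.sum_congr rfl fun j _ =>
            Finset.sum_congr rfl fun k _ => step i j k
      _ = ∑ i, ∑ k, ∑ j, d k * F j i * B k j * C k i :=
          Finset.sum_congr rfl fun i _ => Finset.sum_comm
      _ = ∑ k, ∑ i, ∑ j, d k * F j i * B k j * C k i := Finset.sum_comm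
      _ = ∑ k, ∑ j, ∑ i, d k * F j i * B k j * C k i :=
          Finset.sum_congr rfl fun k _ => Finset.sum_comm
      _ = S2 := by rw [hS2]
  -- RHS reduction
  have hRHS : Matrix.trace (Matrix.diagonal d * (B * C - C * B) * Fᵀ) = T - U := by
    rw [Matrix.mul_assoc, Matrix.trace]
    rw [hT, hU, ← Finset.sum_sub_distrib]
    refine Finset.sum_congr rfl fun i _ => ?_
    show (Matrix.diagonal d * ((B * C - C * B) * Fᵀ)) i i = _
    rw [Matrix.diagonal_mul, Matrix.mul_apply]
    simp only [Matrix.sub_apply, Matrix.transpose_apply, Matrix.mul_apply]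
    rw [Finset.mul_sum, ← Finset.sum_sub_distrib]
    refine Finset.sum_congr rfl fun j _ => ?_
    rw [sub_mul, mul_sub, Finset.sum_mul, Finset.sum_mul, Finset.mul_sum,
      Finset.mul_sum, ← Finset.sum_sub_distrib, ← Finset.sum_sub_distrib]
    exact Finset.sum_congr rfl fun k _ => by ring
  rw [hsplit, hS1, hS3, hRHS, hS2T, hUS2, hS2T]
  ring
end

section
/- Let G be a connected simple graph on the vertex set {1,…,N} and let Z be an antisymmetric N×N real matrix (Zᵀ = −Z). Suppose that Tr(Z Yᵀ) = 0 for every N×N real matrix Y that is antisymmetric (Yᵀ = −Y), has all row sums zero (Y·𝟙 = 0), and satisfies Y_{ij} = 0 whenever i ≠ j and i, j are not adjacent in G. Then there exists a discrete pressure field p ∈ ℝᴺ such that Z_{ij} = p_j − p_i for every pair of adjacent vertices i, j. -/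
open Matrix


lemma stdBasis_transpose {N : ℕ} (i j : Fin N) (c : ℝ) :
    (Matrix.single i j c)ᵀ = Matrix.single j i c := by
  ext a b; simp [Matrix.single, and_comm]

variable {N : ℕ} {G : SimpleGraph (Fin N)}

noncomputable def Ymat (G : SimpleGraph (Fin N)) (l : List G.Dart) : Matrix (Fin N) (Fin N) ℝ :=
  (l.map (fun d => Matrix.single d.fst d.snd (1:ℝ) - Matrix.single d.snd d.fst 1)).sum

lemma Ymat_antisym (l : List G.Dart) : (Ymat G l)ᵀ = -(Ymat G l) := by
  induction l with
  | nil => simp [Ymat]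
  | cons d l ih =>
    simp only [Ymat, List.map_cons, List.sum_cons, transpose_add, transpose_sub,
      stdBasis_transpose] at *
    rw [ih]; abel

lemma tele {M : Type*} [AddCommGroup M] (f : Fin N → M) {a b : Fin N} (w : G.Walk a b) :
    (w.darts.map (fun d => f d.snd - f d.fst)).sum = f b - f a := by
  induction w with
  | nil => simp
  | cons h w ih => simp [ih]

lemma Ymat_mulVec {a : Fin N} (w : G.Walk a a) : Ymat G w.darts *ᵥ (1 : Fin N → ℝ) = 0 := by
  have h1 : ∀ l : List G.Dart, Ymat G l *ᵥ (1 : Fin N → ℝ)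
      = (l.map (fun d => (Pi.single d.fst 1 : Fin N → ℝ) - Pi.single d.snd 1)).sum := by
    intro l
    induction l with
    | nil => simp [Ymat]
    | cons d l ih =>
      simp only [Ymat, List.map_cons, List.sum_cons, add_mulVec, sub_mulVec,
        single_mulVec] at *
      rw [ih]
      congr 1
      ext k
      simp [Pi.single_apply, Function.update_apply, eq_comm]
  rw [h1]
  have := tele (G := G) (fun v => -(Pi.single v 1 : Fin N → ℝ)) w
  simp only [sub_neg_eq_add, neg_add_eq_sub] at this
  have h2 : (w.darts.map (fun d => (Pi.single d.fst 1 : Fin N → ℝ) - Pi.single d.snd 1)).sum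
      = (w.darts.map (fun d => -(Pi.single d.snd 1 : Fin N → ℝ) - -(Pi.single d.fst 1))).sum := by
    congr 1; apply List.map_congr_left; intro d _; abel
  rw [h2, tele (G := G) (fun v => -(Pi.single v 1 : Fin N → ℝ)) w]
  simp

lemma Ymat_support (l : List G.Dart) (i j : Fin N) (h : ¬G.Adj i j) : Ymat G l i j = 0 := by
  induction l with
  | nil => simp [Ymat]
  | cons d l ih =>
    simp only [Ymat, List.map_cons, List.sum_cons, Matrix.add_apply, Matrix.sub_apply] at *
    rw [ih]
    rw [Matrix.single_apply_of_ne, Matrix.single_apply_of_ne]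
    · ring
    · rintro ⟨rfl, rfl⟩; exact h (G.adj_symm d.adj)
    · rintro ⟨rfl, rfl⟩; exact h d.adj

lemma trace_Ymat (Z : Matrix (Fin N) (Fin N) ℝ) (l : List G.Dart) :
    Matrix.trace (Z * (Ymat G l)ᵀ) = (l.map (fun d => Z d.fst d.snd - Z d.snd d.fst)).sum := by
  induction l with
  | nil => simp [Ymat]
  | cons d l ih =>
    simp only [Ymat, List.map_cons, List.sum_cons, transpose_add, transpose_sub,
      stdBasis_transpose, mul_add, mul_sub, trace_add, trace_sub] at *
    rw [ih]
    have key : ∀ a b : Fin N, Matrix.trace (Z * Matrix.single a b 1) = Z b a := by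
      intro a b
      simp [Matrix.trace, Matrix.diag, mul_apply, Matrix.single, Finset.sum_ite_eq,
        ite_and]
    rw [key, key]

lemma sum_map_neg' {α : Type*} (l : List α) (f : α → ℝ) :
    (l.map (fun x => -f x)).sum = -((l.map f).sum) := by
  induction l with
  | nil => simp
  | cons a l ih => simp [ih]; ring

lemma closed_sum (Z : Matrix (Fin N) (Fin N) ℝ) (hZ : Zᵀ = -Z)
    (horth : ∀ Y : Matrix (Fin N) (Fin N) ℝ, Yᵀ = -Y →
      Y *ᵥ (1 : Fin N → ℝ) = 0 →
      (∀ i j, i ≠ j → ¬G.Adj i j → Y i j = 0) →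
      Matrix.trace (Z * Yᵀ) = 0) {a : Fin N} (w : G.Walk a a) :
    (w.darts.map (fun d => Z d.fst d.snd)).sum = 0 := by
  have hanti : ∀ i j : Fin N, Z j i = -Z i j := by
    intro i j
    have := congrFun (congrFun hZ i) j
    simpa using this
  have h := horth (Ymat G w.darts) (Ymat_antisym _) (Ymat_mulVec w)
    (fun i j _ hn => Ymat_support _ i j hn)
  rw [trace_Ymat] at h
  have h2 : (w.darts.map (fun d => Z d.fst d.snd - Z d.snd d.fst)).sum
      = (w.darts.map (fun d => Z d.fst d.snd)).sum
        + (w.darts.map (fun d => Z d.fst d.snd)).sum := by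
    rw [show (fun d : G.Dart => Z d.fst d.snd - Z d.snd d.fst)
        = fun d : G.Dart => Z d.fst d.snd + Z d.fst d.snd from
      funext fun d => by rw [hanti]; ring]
    exact List.sum_map_add ..
  rw [h2] at h
  linarith

/-- **Pressure lemma.** Let `G` be a connected simple graph on `{1,…,N}` and `Z` an
antisymmetric matrix such that `Tr(Z Yᵀ) = 0` for every antisymmetric null-row matrix
`Y` supported on adjacent pairs of `G`. Then there exists a discrete pressure field
`p` with `Z_{ij} = p_j − p_i` on every edge of `G`. -/
theorem pressure_lemma (N : ℕ) (G : SimpleGraph (Fin N)) (hG : G.Connected)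
    (Z : Matrix (Fin N) (Fin N) ℝ) (hZ : Zᵀ = -Z)
    (horth : ∀ Y : Matrix (Fin N) (Fin N) ℝ, Yᵀ = -Y →
      Y *ᵥ (1 : Fin N → ℝ) = 0 →
      (∀ i j, i ≠ j → ¬G.Adj i j → Y i j = 0) →
      Matrix.trace (Z * Yᵀ) = 0) :
    ∃ p : Fin N → ℝ, ∀ i j, G.Adj i j → Z i j = p j - p i := by
  have hanti : ∀ i j : Fin N, Z j i = -Z i j := by
    intro i j
    have := congrFun (congrFun hZ i) j
    simpa using this
  obtain ⟨v0⟩ := hG.nonempty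
  have wk : ∀ v, G.Walk v0 v := fun v => (hG.preconnected v0 v).some
  refine ⟨fun v => ((wk v).darts.map (fun d => Z d.fst d.snd)).sum, fun i j hij => ?_⟩
  have hc := closed_sum Z hZ horth ((wk i).append ((SimpleGraph.Walk.cons hij
    SimpleGraph.Walk.nil).append (wk j).reverse))
  rw [SimpleGraph.Walk.darts_append, SimpleGraph.Walk.darts_append,
    SimpleGraph.Walk.darts_cons, SimpleGraph.Walk.darts_nil,
    SimpleGraph.Walk.darts_reverse] at hc
  simp only [List.map_append, List.sum_append, List.map_reverse, List.sum_reverse,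
    List.map_map, List.map_cons, List.map_nil, List.sum_cons, List.sum_nil] at hc
  have hrev : (List.map ((fun d : G.Dart => Z d.fst d.snd) ∘ SimpleGraph.Dart.symm)
      (wk j).darts).sum = -((wk j).darts.map (fun d => Z d.fst d.snd)).sum := by
    rw [show ((fun d : G.Dart => Z d.fst d.snd) ∘ SimpleGraph.Dart.symm)
        = fun d : G.Dart => -(Z d.fst d.snd) from funext fun d => by
      simp only [Function.comp_apply]; exact hanti d.fst d.snd]
    exact sum_map_neg' _ _
  rw [hrev] at hc
  dsimp only
  linarith
end

section
/- Let Ω be an N×N real diagonal matrix with positive diagonal entries and let G be a connected simple graph on {1,…,N}. Let S be the set of N×N real matrices that are Ω-antisymmetric, null-row, and supported on adjacent pairs of G. Let A : ℝ → Matrix (N×N, ℝ) with A(t) ∈ S for all t, and let A♭ : ℝ → Matrix (N×N, ℝ) be a differentiable curve of antisymmetric matrices. Suppose that for every t and every B ∈ S, Tr((dA♭/dt(t)·Ω + [A(t), A♭(t)Ω])·B) = 0, where [X,Y] = XY − YX. Then for every t there exists a discrete pressure p ∈ ℝᴺ such that for every pair of adjacent vertices i, j: (dA♭/dt(t) + [A(t),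 A♭(t)Ω]Ω⁻¹)_{ij} + (p_j − p_i) = 0. -/
open Matrix

lemma discrete_hodge (N : ℕ) (G : SimpleGraph (Fin N)) (c : Matrix (Fin N) (Fin N) ℝ)
    (hcanti : ∀ i j, c j i = -c i j)
    (horth : ∀ f : Matrix (Fin N) (Fin N) ℝ, (∀ i j, f j i = -f i j) →
      (∀ i j, ¬G.Adj i j → f i j = 0) → (∀ i, ∑ j, f i j = 0) →
      ∑ i, ∑ j, c i j * f i j = 0) :
    ∃ p : Fin N → ℝ, ∀ i j, G.Adj i j → c i j = p i - p j := by
  classical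
  set V := EuclideanSpace ℝ (Fin N × Fin N) with hV
  set E := EuclideanSpace ℝ (Fin N) with hE
  let T : E →ₗ[ℝ] V :=
    { toFun := fun p => (WithLp.toLp 2 (fun ij : Fin N × Fin N => if G.Adj ij.1 ij.2 then p ij.1 - p ij.2 else 0) : V)
      map_add' := by
        intro x y; ext ij
        show (if G.Adj ij.1 ij.2 then (x ij.1 + y ij.1) - (x ij.2 + y ij.2) else 0)
          = (if G.Adj ij.1 ij.2 then x ij.1 - x ij.2 else 0)
            + (if G.Adj ij.1 ij.2 then y ij.1 - y ij.2 else 0)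
        by_cases h : G.Adj ij.1 ij.2 <;> simp [h] <;> ring
      map_smul' := by
        intro r x; ext ij
        show (if G.Adj ij.1 ij.2 then (r * x ij.1) - (r * x ij.2) else 0)
          = r * (if G.Adj ij.1 ij.2 then x ij.1 - x ij.2 else 0)
        by_cases h : G.Adj ij.1 ij.2 <;> simp [h] <;> ring }
  let cv : V := WithLp.toLp 2 (fun ij : Fin N × Fin N => if G.Adj ij.1 ij.2 then c ij.1 ij.2 else 0)
  have hmem : cv ∈ LinearMap.range T := by
    rw [← Submodule.orthogonal_orthogonal (LinearMap.range T)]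
    intro f hf
    -- divergence-free condition from orthogonality to gradients
    have hdiv : ∀ i, ∑ l, (if G.Adj i l then f (i, l) else 0)
        = ∑ l, (if G.Adj i l then f (l, i) else 0) := by
      intro i
      have h0 := hf (T (EuclideanSpace.single i 1)) (LinearMap.mem_range_self T _)
      have h1 : (inner ℝ (T (EuclideanSpace.single i 1)) f : ℝ)
          = ∑ kl : Fin N × Fin N,
              (if G.Adj kl.1 kl.2 then
                (EuclideanSpace.single i (1:ℝ)) kl.1 - (EuclideanSpace.single i (1:ℝ)) kl.2
               else 0) * f kl := by
        rw [PiLp.inner_apply]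
        simp only [RCLike.inner_apply, conj_trivial]
        exact Finset.sum_congr rfl (fun kl _ => mul_comm _ _)
      rw [h0] at h1
      rw [Fintype.sum_prod_type] at h1
      simp only [EuclideanSpace.single_apply] at h1
      have h2 : ∀ k l : Fin N,
          (if G.Adj k l then (if k = i then (1:ℝ) else 0) - (if l = i then 1 else 0) else 0)
            * f (k, l)
          = (if k = i then (if G.Adj k l then f (k,l) else 0) else 0)
            - (if l = i then (if G.Adj k l then f (k,l) else 0) else 0) := by
        intro k l
        by_cases hk : k = i <;> by_cases hl : l = i <;> by_cases ha : G.Adj k l <;>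
          simp [hk, hl, ha] <;> split_ifs <;> ring
      rw [Finset.sum_congr rfl (fun k _ => Finset.sum_congr rfl (fun l _ => h2 k l))] at h1
      simp only [Finset.sum_sub_distrib] at h1
      rw [Finset.sum_comm (f := fun k l =>
        if l = i then (if G.Adj k l then f (k,l) else 0) else 0)] at h1
      simp only [Finset.sum_ite_irrel, Finset.sum_const_zero] at h1
      simp only [Finset.sum_ite_eq', Finset.mem_univ, if_true] at h1
      have h3 : ∀ l, (if G.Adj l i then f (l, i) else 0)
          = (if G.Adj i l then f (l, i) else 0) := by
        intro l; rw [G.adj_comm]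
      rw [Finset.sum_congr rfl (fun l _ => h3 l)] at h1
      linarith [h1]
    -- build the antisymmetric divergence-free flow
    set f' : Matrix (Fin N) (Fin N) ℝ :=
      fun k l => if G.Adj k l then f (k, l) - f (l, k) else 0 with hf'
    have hf'anti : ∀ i j, f' j i = -f' i j := by
      intro i j
      by_cases h : G.Adj i j
      · simp [f', h, h.symm]
      · have h' : ¬ G.Adj j i := fun hh => h hh.symm
        simp [f', h, h']
    have hf'supp : ∀ i j, ¬G.Adj i j → f' i j = 0 := by
      intro i j h; simp [f', h]
    have hf'div : ∀ i, ∑ j, f' i j = 0 := by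
      intro i
      have he : ∑ j, f' i j = (∑ l, (if G.Adj i l then f (i, l) else 0))
          - ∑ l, (if G.Adj i l then f (l, i) else 0) := by
        rw [← Finset.sum_sub_distrib]
        refine Finset.sum_congr rfl (fun l _ => ?_)
        by_cases h : G.Adj i l <;> simp [f', h]
      rw [he, hdiv i, sub_self]
    have key := horth f' hf'anti hf'supp hf'div
    -- the main sum identities
    have keyexp : ∑ k, ∑ l, (if G.Adj k l then c k l * f (k, l) else 0)
        - ∑ k, ∑ l, (if G.Adj k l then c k l * f (l, k) else 0) = 0 := by
      rw [← Finset.sum_sub_distrib]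
      rw [← key]
      refine Finset.sum_congr rfl (fun k _ => ?_)
      rw [← Finset.sum_sub_distrib]
      refine Finset.sum_congr rfl (fun l _ => ?_)
      by_cases h : G.Adj k l <;> simp [f', h] <;> ring
    have hswap : ∑ k, ∑ l, (if G.Adj k l then c k l * f (l, k) else 0)
        = -∑ k, ∑ l, (if G.Adj k l then c k l * f (k, l) else 0) := by
      rw [Finset.sum_comm]
      rw [← Finset.sum_neg_distrib]
      refine Finset.sum_congr rfl (fun k _ => ?_)
      rw [← Finset.sum_neg_distrib]
      refine Finset.sum_congr rfl (fun l _ => ?_)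
      by_cases h : G.Adj k l
      · simp [h, h.symm, hcanti k l]
      · have h' : ¬ G.Adj l k := fun hh => h hh.symm
        simp [h, h']
    have hS : ∑ k, ∑ l, (if G.Adj k l then c k l * f (k, l) else 0) = 0 := by
      rw [hswap] at keyexp; linarith
    have h4 : (inner ℝ f cv : ℝ) = ∑ kl : Fin N × Fin N, f kl * cv kl := by
      rw [PiLp.inner_apply]; simp only [RCLike.inner_apply, conj_trivial]; exact Finset.sum_congr rfl (fun kl _ => mul_comm _ _)
    rw [h4, Fintype.sum_prod_type, ← hS]
    refine Finset.sum_congr rfl (fun k _ => Finset.sum_congr rfl (fun l _ => ?_))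
    by_cases h : G.Adj k l <;> simp [cv, h] <;> ring
  obtain ⟨p, hp⟩ := hmem
  refine ⟨fun i => p i, fun i j hij => ?_⟩
  have := congrArg (fun v : V => v (i, j)) hp
  simpa [T, cv, hij] using this.symm

open Matrix

/-- **Discrete Euler equations with pressure.** Let `Ω` be a positive diagonal matrix
and `G` a connected adjacency graph. If the discrete velocity `A(t)` lies in the
constrained set `S` (`Ω`-antisymmetric, null-row, supported on adjacent pairs), `A♭(t)`
is a differentiable curve of antisymmetric matrices, and the discrete Euler–Lagrange
condition `Tr((Ȧ♭Ω + [A, A♭Ω])B) = 0` holds for every `B ∈ S`, then for every `t` there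
is a discrete pressure `p` with `(Ȧ♭ + [A, A♭Ω]Ω⁻¹)_{ij} + (p_j − p_i) = 0` on edges. -/
theorem discrete_euler_equations (N : ℕ) (d : Fin N → ℝ) (hd : ∀ i, 0 < d i)
    (G : SimpleGraph (Fin N)) (hG : G.Connected)
    (A : ℝ → Matrix (Fin N) (Fin N) ℝ)
    (hAS : ∀ t, (A t)ᵀ * Matrix.diagonal d + Matrix.diagonal d * A t = 0 ∧
      A t *ᵥ (1 : Fin N → ℝ) = 0 ∧ ∀ i j, ¬G.Adj i j → A t i j = 0)
    (F F' : ℝ → Matrix (Fin N) (Fin N) ℝ)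
    (hFanti : ∀ t, (F t)ᵀ = -(F t))
    (hFderiv : ∀ t i j, HasDerivAt (fun s => F s i j) (F' t i j) t)
    (hEL : ∀ t, ∀ B : Matrix (Fin N) (Fin N) ℝ,
      Bᵀ * Matrix.diagonal d + Matrix.diagonal d * B = 0 →
      B *ᵥ (1 : Fin N → ℝ) = 0 →
      (∀ i j, ¬G.Adj i j → B i j = 0) →
      Matrix.trace ((F' t * Matrix.diagonal d
        + (A t * (F t * Matrix.diagonal d) - (F t * Matrix.diagonal d) * A t)) * B)
        = 0) :
    ∀ t, ∃ p : Fin N → ℝ, ∀ i j, G.Adj i j →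
      (F' t + (A t * (F t * Matrix.diagonal d) - (F t * Matrix.diagonal d) * A t)
          * (Matrix.diagonal d)⁻¹) i j
        + (p j - p i) = 0 := by
  classical
  intro t
  have hdne : ∀ i, d i ≠ 0 := fun i => (hd i).ne'
  obtain ⟨hA1m, hA2, hA3⟩ := hAS t
  set X : Matrix (Fin N) (Fin N) ℝ :=
    A t * (F t * Matrix.diagonal d) - (F t * Matrix.diagonal d) * A t with hXdef
  have hDinv : (Matrix.diagonal d)⁻¹ = Matrix.diagonal (fun i => (d i)⁻¹) := by
    apply Matrix.inv_eq_right_inv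
    rw [Matrix.diagonal_mul_diagonal]
    have he : (fun i => d i * (d i)⁻¹) = fun _ => (1:ℝ) := funext fun i => mul_inv_cancel₀ (hdne i)
    rw [he, Matrix.diagonal_one]
  -- entrywise Ω-antisymmetry of A
  have hA1 : ∀ i j, d i * A t i j + d j * A t j i = 0 := by
    intro i j
    have h := congrFun (congrFun hA1m i) j
    simp only [Matrix.add_apply, Matrix.mul_diagonal, Matrix.diagonal_mul,
      Matrix.transpose_apply, Matrix.zero_apply] at h
    linarith
  -- entrywise antisymmetry of F and F'
  have hFa : ∀ s (i j : Fin N), F s j i = -F s i j := by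
    intro s i j
    have h := congrFun (congrFun (hFanti s) i) j
    simpa using h
  have hF'a : ∀ i j : Fin N, F' t j i = -F' t i j := by
    intro i j
    have h1 : HasDerivAt (fun s => F s j i) (F' t j i) t := hFderiv t j i
    have h2 : HasDerivAt (fun s => F s j i) (-F' t i j) t := by
      have h3 := (hFderiv t i j).neg
      have hfun : (-fun s => F s i j) = fun s => F s j i := funext fun s => (hFa s i j).symm
      rwa [hfun] at h3
    exact h1.unique h2
  -- entrywise formula for X
  have hXentry : ∀ i j, X i j
      = (∑ k, A t i k * (F t k j * d j)) - ∑ k, (F t i k * d k) * A t k j := by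
    intro i j
    rw [hXdef, Matrix.sub_apply, Matrix.mul_apply, Matrix.mul_apply]
    simp only [Matrix.mul_diagonal]
  -- Ω-antisymmetry of X
  have hX : ∀ i j, d j * X j i + d i * X i j = 0 := by
    intro i j
    rw [hXentry j i, hXentry i j, mul_sub, mul_sub, Finset.mul_sum, Finset.mul_sum,
      Finset.mul_sum, Finset.mul_sum, ← Finset.sum_sub_distrib, ← Finset.sum_sub_distrib,
      ← Finset.sum_add_distrib]
    refine Finset.sum_eq_zero (fun k _ => ?_)
    have a1 := hA1 i k
    have a2 := hA1 j k
    have f1 := hFa t i k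
    have f2 := hFa t k j
    linear_combination (d j * d i * A t j k) * f1 + (-(d j * d k * A t k i)) * f2
      + (-(d i * F t i k)) * a2 + (d j * F t k j) * a1
  -- the matrix C = F' + X D⁻¹
  set Cm : Matrix (Fin N) (Fin N) ℝ := fun i j => F' t i j + X i j * (d j)⁻¹ with hCm
  have hcanti : ∀ i j, Cm j i = -Cm i j := by
    intro i j
    have h := hX i j
    have h2 : X j i * (d i)⁻¹ = -(X i j * (d j)⁻¹) := by
      field_simp [hdne i, hdne j]
      linear_combination h
    show F' t j i + X j i * (d i)⁻¹ = -(F' t i j + X i j * (d j)⁻¹)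
    rw [hF'a i j, h2]; ring
  -- orthogonality from the Euler-Lagrange condition
  have horth : ∀ f : Matrix (Fin N) (Fin N) ℝ, (∀ i j, f j i = -f i j) →
      (∀ i j, ¬G.Adj i j → f i j = 0) → (∀ i, ∑ j, f i j = 0) →
      ∑ i, ∑ j, Cm i j * f i j = 0 := by
    intro f hanti hsupp hdivf
    set B : Matrix (Fin N) (Fin N) ℝ := fun i j => (d i)⁻¹ * f i j with hB
    have hB1 : Bᵀ * Matrix.diagonal d + Matrix.diagonal d * B = 0 := by
      ext i j
      simp only [Matrix.add_apply, Matrix.mul_diagonal, Matrix.diagonal_mul,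
        Matrix.transpose_apply, Matrix.zero_apply]
      show (d j)⁻¹ * f j i * d j + d i * ((d i)⁻¹ * f i j) = 0
      rw [hanti i j]
      field_simp [hdne i, hdne j]
      ring
    have hB2 : B *ᵥ (1 : Fin N → ℝ) = 0 := by
      funext i
      show ∑ j, B i j * 1 = 0
      simp only [mul_one]
      show ∑ j, (d i)⁻¹ * f i j = 0
      rw [← Finset.mul_sum, hdivf i, mul_zero]
    have hB3 : ∀ i j, ¬G.Adj i j → B i j = 0 := by
      intro i j h
      show (d i)⁻¹ * f i j = 0
      rw [hsupp i j h, mul_zero]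
    have htr := hEL t B hB1 hB2 hB3
    have htr2 : Matrix.trace ((F' t * Matrix.diagonal d + X) * B)
        = -∑ i, ∑ k, Cm i k * f i k := by
      rw [Matrix.trace, ← Finset.sum_neg_distrib]
      refine Finset.sum_congr rfl (fun i _ => ?_)
      rw [Matrix.diag_apply, Matrix.mul_apply, ← Finset.sum_neg_distrib]
      refine Finset.sum_congr rfl (fun k _ => ?_)
      have e1 : (F' t * Matrix.diagonal d + X) i k = F' t i k * d k + X i k := by
        simp [Matrix.add_apply, Matrix.mul_diagonal]
      rw [e1]
      show (F' t i k * d k + X i k) * ((d k)⁻¹ * f k i)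
        = -((F' t i k + X i k * (d k)⁻¹) * f i k)
      rw [hanti i k]
      field_simp [hdne k]
    rw [← hXdef] at htr
    rw [htr2] at htr
    linarith
  obtain ⟨p, hp⟩ := discrete_hodge N G Cm hcanti horth
  refine ⟨p, fun i j hij => ?_⟩
  have hentry : (F' t + X * (Matrix.diagonal d)⁻¹) i j = Cm i j := by
    rw [hDinv, Matrix.add_apply, Matrix.mul_diagonal]
  rw [hentry, hp i j hij]
  ring
end

section
/- Let Ω be an N×N real diagonal matrix with positive diagonal entries and let G be a simple graph on {1,…,N}. Let S be the set of N×N real matrices that are Ω-antisymmetric, null-row, and supported on adjacent pairs of G. Let A : ℝ → Matrix (N×N, ℝ) with A(t) ∈ S for all t, let A♭ : ℝ → Matrix (N×N, ℝ) be a differentiable curve of antisymmetric matrices, let p : ℝ → ℝᴺ, and let Γ : ℝ → Matrix (N×N, ℝ) be a differentiable curve with Γ(t) ∈ S for all t (a discrete closed curve advected by the flow). Suppose that for every t: (i) for every pair of adjacent vertices i, j, (dA♭/dt(t) + [A(t), A♭(t)Ω]Ω⁻¹)_{ij} + (p(t)_j − p(t)_i) = 0 (the discrete Euler equations), and (ii)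 Tr(Ω·(dΓ/dt(t) + [A(t), Γ(t)])·A♭(t)ᵀ) = 0 (the discrete advection of Γ tested against A♭). Then the discrete circulation C(t) = Tr(Ω Γ(t) A♭(t)ᵀ) is constant in t: dC/dt = 0. -/
open Matrix

/-- Trace of `D M Bᵀ` as an explicit double sum. -/
lemma kelvin_trace_form {N : ℕ} (d : Fin N → ℝ) (M B : Matrix (Fin N) (Fin N) ℝ) :
    Matrix.trace (Matrix.diagonal d * M * Bᵀ) = ∑ i, ∑ j, d i * M i j * B i j := by
  simp [Matrix.trace, Matrix.mul_apply, Matrix.diag, mul_assoc, Matrix.diagonal_apply,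
    Finset.sum_ite_eq, Finset.mul_sum]

/-- **Discrete Kelvin circulation theorem.** Let `A(t) ∈ S` be a discrete velocity with
antisymmetric flat `A♭(t)` satisfying the discrete Euler equations with pressure `p(t)`
on the edges of the adjacency graph `G`, and let `Γ(t) ∈ S` be a discrete closed curve
advected by the flow in the weak sense `Tr(Ω(Γ̇ + [A,Γ])(A♭)ᵀ) = 0`. Then the discrete
circulation `C(t) = Tr(Ω Γ(t) (A♭(t))ᵀ)` is constant in time. -/
theorem discrete_kelvin (N : ℕ) (d : Fin N → ℝ) (hd : ∀ i, 0 < d i)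
    (G : SimpleGraph (Fin N))
    (A : ℝ → Matrix (Fin N) (Fin N) ℝ)
    (hAS : ∀ t, (A t)ᵀ * Matrix.diagonal d + Matrix.diagonal d * A t = 0 ∧
      A t *ᵥ (1 : Fin N → ℝ) = 0 ∧ ∀ i j, ¬G.Adj i j → A t i j = 0)
    (F F' : ℝ → Matrix (Fin N) (Fin N) ℝ)
    (hFanti : ∀ t, (F t)ᵀ = -(F t))
    (hFderiv : ∀ t i j, HasDerivAt (fun s => F s i j) (F' t i j) t)
    (p : ℝ → Fin N → ℝ)
    (Γ Γ' : ℝ → Matrix (Fin N) (Fin N) ℝ)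
    (hΓS : ∀ t, (Γ t)ᵀ * Matrix.diagonal d + Matrix.diagonal d * Γ t = 0 ∧
      Γ t *ᵥ (1 : Fin N → ℝ) = 0 ∧ ∀ i j, ¬G.Adj i j → Γ t i j = 0)
    (hΓderiv : ∀ t i j, HasDerivAt (fun s => Γ s i j) (Γ' t i j) t)
    (hEuler : ∀ t, ∀ i j, G.Adj i j →
      (F' t + (A t * (F t * Matrix.diagonal d) - (F t * Matrix.diagonal d) * A t)
          * (Matrix.diagonal d)⁻¹) i j
        + (p t j - p t i) = 0)
    (hAdvect : ∀ t,
      Matrix.trace (Matrix.diagonal d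
        * (Γ' t + (A t * Γ t - Γ t * A t)) * (F t)ᵀ) = 0) :
    ∀ t, HasDerivAt
      (fun s => Matrix.trace (Matrix.diagonal d * Γ s * (F s)ᵀ)) 0 t := by
  intro t
  have hdne : ∀ i, d i ≠ 0 := fun i => (hd i).ne'
  set D := Matrix.diagonal d with hD
  -- inverse of the diagonal matrix
  have hDinv : D⁻¹ = Matrix.diagonal (fun i => (d i)⁻¹) := by
    apply Matrix.inv_eq_right_inv
    rw [hD, Matrix.diagonal_mul_diagonal]
    have : (fun i => d i * (d i)⁻¹) = fun _ => (1:ℝ) := funext fun i => mul_inv_cancel₀ (hdne i)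
    rw [this, Matrix.diagonal_one]
  -- notation
  set a := A t
  set f := F t
  set f' := F' t
  set g := Γ t
  set g' := Γ' t
  -- entrywise Ω-antisymmetry of Γ
  have hanti : ∀ i j, d i * g i j = -(d j * g j i) := by
    intro i j
    have h := congrFun (congrFun (hΓS t).1 i) j
    rw [hD] at h
    simp only [Matrix.add_apply, Matrix.mul_diagonal, Matrix.diagonal_mul,
      Matrix.transpose_apply, Matrix.zero_apply] at h
    linarith
  -- row sums of Γ vanish
  have hrow : ∀ i, ∑ j, g i j = 0 := by
    intro i
    have h := congrFun (hΓS t).2.1 i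
    simpa [Matrix.mulVec, dotProduct] using h
  have hsupp : ∀ i j, ¬G.Adj i j → g i j = 0 := (hΓS t).2.2
  set K := a * (f * D) - (f * D) * a with hK
  -- value of the derivative
  set V := ∑ i, ∑ j, d i * (g' i j * f i j + g i j * f' i j) with hV
  have hderiv : HasDerivAt (fun s => Matrix.trace (D * Γ s * (F s)ᵀ)) V t := by
    have heq : (fun s => Matrix.trace (D * Γ s * (F s)ᵀ))
        = fun s => ∑ i, ∑ j, d i * (Γ s i j * F s i j) := by
      funext s
      rw [hD, kelvin_trace_form]
      simp [mul_assoc]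
    rw [heq, hV]
    apply HasDerivAt.fun_sum
    intro i _
    apply HasDerivAt.fun_sum
    intro j _
    exact ((hΓderiv t i j).mul (hFderiv t i j)).const_mul (d i)
  have hV0 : V = 0 := by
    -- split V
    have hsplit : V = (∑ i, ∑ j, d i * (g' i j * f i j)) + ∑ i, ∑ j, d i * (g i j * f' i j) := by
      rw [hV, ← Finset.sum_add_distrib]
      congr 1; funext i
      rw [← Finset.sum_add_distrib]
      congr 1; funext j
      ring
    -- advection: first sum equals -trace(D*(a*g-g*a)*fᵀ)
    have hadv : (∑ i, ∑ j, d i * (g' i j * f i j))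
        = -Matrix.trace (D * (a * g - g * a) * fᵀ) := by
      have h := hAdvect t
      have h2 : Matrix.trace (D * g' * fᵀ) + Matrix.trace (D * (a * g - g * a) * fᵀ) = 0 := by
        rw [Matrix.mul_add, Matrix.add_mul, Matrix.trace_add] at h
        exact h
      have h3 : Matrix.trace (D * g' * fᵀ) = ∑ i, ∑ j, d i * (g' i j * f i j) := by
        rw [hD, kelvin_trace_form]; simp [mul_assoc]
      linarith
    -- Euler: entrywise formula for f'
    have hf' : ∀ i j, g i j * f' i j
        = g i j * (-(K i j * (d j)⁻¹) - (p t j - p t i)) := by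
      intro i j
      by_cases hadj : G.Adj i j
      · have h := hEuler t i j hadj
        have h2 : f' i j + K i j * (d j)⁻¹ + (p t j - p t i) = 0 := by
          simpa [hDinv, Matrix.add_apply, Matrix.mul_diagonal, hK] using h
        have : f' i j = -(K i j * (d j)⁻¹) - (p t j - p t i) := by linarith
        rw [this]
      · rw [hsupp i j hadj]; ring
    -- pressure term vanishes
    have hpress : ∑ i, ∑ j, d i * (g i j * (p t j - p t i)) = 0 := by
      have e1 : ∀ i j, d i * (g i j * (p t j - p t i))
          = d i * g i j * p t j - d i * p t i * g i j := by intro i j; ring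
      simp only [e1, Finset.sum_sub_distrib]
      have t1 : ∑ i, ∑ j, d i * g i j * p t j = 0 := by
        rw [Finset.sum_comm]
        apply Finset.sum_eq_zero; intro j _
        have : ∑ i, d i * g i j * p t j = (∑ i, d i * g i j) * p t j := by
          rw [Finset.sum_mul]
        rw [this]
        have : ∑ i, d i * g i j = 0 := by
          calc ∑ i, d i * g i j = ∑ i, -(d j * g j i) := by
                apply Finset.sum_congr rfl; intro i _; exact hanti i j
          _ = -(d j * ∑ i, g j i) := by
                rw [Finset.sum_neg_distrib, ← Finset.mul_sum]
          _ = 0 := by rw [hrow j]; ring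
        rw [this, zero_mul]
      have t2 : ∑ i, ∑ j, d i * p t i * g i j = 0 := by
        apply Finset.sum_eq_zero; intro i _
        rw [← Finset.mul_sum, hrow i, mul_zero]
      rw [t1, t2, sub_zero]
    -- commutator term
    have hcomm : ∑ i, ∑ j, d i * (g i j * (-(K i j * (d j)⁻¹)))
        = Matrix.trace (g * K) := by
      have e1 : ∀ i j, d i * (g i j * (-(K i j * (d j)⁻¹))) = g j i * K i j := by
        intro i j
        have h := hanti i j
        have e : d i * (g i j * -(K i j * (d j)⁻¹)) = -(d i * g i j) * K i j * (d j)⁻¹ := by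
          ring
        rw [e, h, neg_neg]
        calc d j * g j i * K i j * (d j)⁻¹ = g j i * K i j * (d j * (d j)⁻¹) := by ring
          _ = g j i * K i j := by rw [mul_inv_cancel₀ (hdne j), mul_one]
      calc ∑ i, ∑ j, d i * (g i j * (-(K i j * (d j)⁻¹)))
          = ∑ i, ∑ j, g j i * K i j := by
            apply Finset.sum_congr rfl; intro i _
            apply Finset.sum_congr rfl; intro j _
            exact e1 i j
        _ = ∑ j, ∑ i, g j i * K i j := Finset.sum_comm
        _ = Matrix.trace (g * K) := by
            simp [Matrix.trace, Matrix.mul_apply, Matrix.diag]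
    -- second sum
    have hS2 : ∑ i, ∑ j, d i * (g i j * f' i j) = Matrix.trace (g * K) := by
      calc ∑ i, ∑ j, d i * (g i j * f' i j)
          = ∑ i, ∑ j, d i * (g i j * (-(K i j * (d j)⁻¹) - (p t j - p t i))) := by
            apply Finset.sum_congr rfl; intro i _
            apply Finset.sum_congr rfl; intro j _
            rw [hf' i j]
        _ = (∑ i, ∑ j, d i * (g i j * (-(K i j * (d j)⁻¹))))
            - ∑ i, ∑ j, d i * (g i j * (p t j - p t i)) := by
            rw [← Finset.sum_sub_distrib]
            apply Finset.sum_congr rfl; intro i _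
            rw [← Finset.sum_sub_distrib]
            apply Finset.sum_congr rfl; intro j _
            ring
        _ = Matrix.trace (g * K) := by rw [hcomm, hpress, sub_zero]
    -- trace identity: trace(g*K) = trace(D*(a*g-g*a)*fᵀ)
    have htr : Matrix.trace (g * K) = Matrix.trace (D * (a * g - g * a) * fᵀ) := by
      rw [hFanti t]
      show Matrix.trace (g * K) = Matrix.trace (D * (a * g - g * a) * (-f))
      rw [hK]
      rw [Matrix.mul_sub, Matrix.trace_sub]
      rw [Matrix.mul_neg, Matrix.trace_neg, Matrix.mul_sub, Matrix.sub_mul, Matrix.trace_sub]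
      have e1 : Matrix.trace (g * (a * (f * D))) = Matrix.trace (D * (g * a) * f) := by
        rw [show g * (a * (f * D)) = (g * a * f) * D by noncomm_ring,
          Matrix.trace_mul_comm, ← Matrix.mul_assoc]
      have e2 : Matrix.trace (g * (f * D * a)) = Matrix.trace (D * (a * g) * f) := by
        rw [show g * (f * D * a) = (g * (f * D)) * a by noncomm_ring,
          Matrix.trace_mul_comm,
          show a * (g * (f * D)) = (a * g * f) * D by noncomm_ring,
          Matrix.trace_mul_comm, ← Matrix.mul_assoc]
      rw [e1, e2]
      ring
    rw [hsplit, hadv, hS2, htr]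
    ring
  exact hV0 ▸ hderiv
end

section
/- Let Ω be an N×N real diagonal matrix with positive diagonal entries and let G be a connected simple graph on {1,…,N}. Let S be the set of N×N real matrices that are Ω-antisymmetric, null-row, and supported on adjacent pairs of G. Let A₁, A₂ ∈ S (the discrete velocities at two consecutive time steps), let F₁, F₂ be antisymmetric N×N real matrices (their discrete flats), let τ > 0 be the time step, and set Ḟ = (F₂ − F₁)/τ. Suppose that for every B ∈ S: Tr((Ḟ·Ω + A₁F₁Ω − F₂ΩA₂)·B) = 0. Then there exists a discrete pressure p ∈ ℝᴺ such that for every pair of adjacent vertices i, j: (Ḟ + ½([A₁, F₁Ω]Ω⁻¹ + [A₂, F₂Ω]Ω⁻¹))_{ij} + (p_j − p_i) = 0. -/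
open Matrix
open scoped RealInnerProductSpace

lemma mem_range_of_orth' {V W : Type*} [NormedAddCommGroup V] [InnerProductSpace ℝ V]
    [FiniteDimensional ℝ V] [AddCommGroup W] [Module ℝ W] (g : W →ₗ[ℝ] V) (e : V)
    (h : ∀ v : V, (∀ p : W, ⟪g p, v⟫ = 0) → ⟪v, e⟫ = 0) : e ∈ LinearMap.range g := by
  rw [← Submodule.orthogonal_orthogonal (LinearMap.range g), Submodule.mem_orthogonal]
  intro u hu
  exact h u (fun p => hu (g p) ⟨p, rfl⟩)

noncomputable def gmap' {N : ℕ} (G : SimpleGraph (Fin N)) :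
    (Fin N → ℝ) →ₗ[ℝ] EuclideanSpace ℝ (Fin N × Fin N) := by
  classical
  exact
  { toFun := fun p => WithLp.toLp 2 (fun q => if G.Adj q.1 q.2 then p q.1 - p q.2 else 0 : Fin N × Fin N → ℝ)
    map_add' := by
      intro p r
      ext q
      by_cases h : G.Adj q.1 q.2 <;> simp [h, PiLp.add_apply] <;> ring
    map_smul' := by
      intro c p
      ext q
      by_cases h : G.Adj q.1 q.2 <;> simp [h, PiLp.smul_apply, smul_eq_mul] <;> ring }

lemma gmap'_apply {N : ℕ} (G : SimpleGraph (Fin N)) [DecidableRel G.Adj] (p : Fin N → ℝ)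
    (q : Fin N × Fin N) : gmap' G p q = if G.Adj q.1 q.2 then p q.1 - p q.2 else 0 := by
  rw [gmap']
  simp only [LinearMap.coe_mk, AddHom.coe_mk, PiLp.toLp_apply]
  congr 1


/-- **Fully discrete Euler equations (Crank–Nicolson form).** Let `A₁, A₂ ∈ S` be the
discrete velocities at two consecutive time steps with antisymmetric flats `F₁, F₂`,
time step `τ > 0`, and `Ḟ = (F₂ − F₁)/τ`. If the fully discrete Euler–Lagrange
condition `Tr((ḞΩ + A₁F₁Ω − F₂ΩA₂)B) = 0` holds for all `B ∈ S`, then there exists a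
discrete pressure `p` such that on every edge
`(Ḟ + ½([A₁,F₁Ω]Ω⁻¹ + [A₂,F₂Ω]Ω⁻¹))_{ij} + (p_j − p_i) = 0`. -/
theorem fully_discrete_euler_equations (N : ℕ) (d : Fin N → ℝ) (hd : ∀ i, 0 < d i)
    (G : SimpleGraph (Fin N)) (hG : G.Connected)
    (A₁ A₂ F₁ F₂ : Matrix (Fin N) (Fin N) ℝ)
    (hA₁S : A₁ᵀ * Matrix.diagonal d + Matrix.diagonal d * A₁ = 0 ∧
      A₁ *ᵥ (1 : Fin N → ℝ) = 0 ∧ ∀ i j, ¬G.Adj i j → A₁ i j = 0)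
    (hA₂S : A₂ᵀ * Matrix.diagonal d + Matrix.diagonal d * A₂ = 0 ∧
      A₂ *ᵥ (1 : Fin N → ℝ) = 0 ∧ ∀ i j, ¬G.Adj i j → A₂ i j = 0)
    (hF₁ : F₁ᵀ = -F₁) (hF₂ : F₂ᵀ = -F₂)
    (τ : ℝ) (hτ : 0 < τ)
    (hEL : ∀ B : Matrix (Fin N) (Fin N) ℝ,
      Bᵀ * Matrix.diagonal d + Matrix.diagonal d * B = 0 →
      B *ᵥ (1 : Fin N → ℝ) = 0 →
      (∀ i j, ¬G.Adj i j → B i j = 0) →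
      Matrix.trace ((τ⁻¹ • (F₂ - F₁) * Matrix.diagonal d
          + A₁ * F₁ * Matrix.diagonal d
          - F₂ * Matrix.diagonal d * A₂) * B) = 0) :
    ∃ p : Fin N → ℝ, ∀ i j, G.Adj i j →
      (τ⁻¹ • (F₂ - F₁)
        + ((1 : ℝ) / 2) •
          ((A₁ * (F₁ * Matrix.diagonal d) - (F₁ * Matrix.diagonal d) * A₁)
              * (Matrix.diagonal d)⁻¹
            + (A₂ * (F₂ * Matrix.diagonal d) - (F₂ * Matrix.diagonal d) * A₂)
              * (Matrix.diagonal d)⁻¹)) i j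
        + (p j - p i) = 0 := by
  classical
  obtain ⟨hA₁a, hA₁r, hA₁s⟩ := hA₁S
  obtain ⟨hA₂a, hA₂r, hA₂s⟩ := hA₂S
  have hd0 : ∀ i, d i ≠ 0 := fun i => (hd i).ne'
  have hDinv : (Matrix.diagonal d)⁻¹ = Matrix.diagonal (fun i => (d i)⁻¹) := by
    apply Matrix.inv_eq_right_inv
    rw [Matrix.diagonal_mul_diagonal]
    rw [show (fun i => d i * (d i)⁻¹) = fun _ => (1:ℝ) from
      funext fun i => mul_inv_cancel₀ (hd0 i)]
    exact Matrix.diagonal_one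
  simp only [hDinv]
  set D : Matrix (Fin N) (Fin N) ℝ := Matrix.diagonal d with hDdef
  set Di : Matrix (Fin N) (Fin N) ℝ := Matrix.diagonal (fun i => (d i)⁻¹) with hDidef
  set E : Matrix (Fin N) (Fin N) ℝ :=
    τ⁻¹ • (F₂ - F₁) + ((1 : ℝ) / 2) •
      ((A₁ * (F₁ * D) - (F₁ * D) * A₁) * Di
        + (A₂ * (F₂ * D) - (F₂ * D) * A₂) * Di) with hEdef
  set M : Matrix (Fin N) (Fin N) ℝ :=
    τ⁻¹ • (F₂ - F₁) * D + A₁ * F₁ * D - F₂ * D * A₂ with hMdef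
  have hDt : Dᵀ = D := Matrix.diagonal_transpose d
  have hDit : Diᵀ = Di := Matrix.diagonal_transpose _
  have hDDi : D * Di = 1 := by
    rw [hDdef, hDidef, Matrix.diagonal_mul_diagonal]
    rw [show (fun i => d i * (d i)⁻¹) = fun _ => (1:ℝ) from
      funext fun i => mul_inv_cancel₀ (hd0 i)]
    exact Matrix.diagonal_one
  have hDiD : Di * D = 1 := by
    rw [hDdef, hDidef, Matrix.diagonal_mul_diagonal]
    rw [show (fun i => (d i)⁻¹ * d i) = fun _ => (1:ℝ) from
      funext fun i => inv_mul_cancel₀ (hd0 i)]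
    exact Matrix.diagonal_one
  have hc1 : ∀ X : Matrix (Fin N) (Fin N) ℝ, D * (Di * X) = X := fun X => by
    rw [← Matrix.mul_assoc, hDDi, Matrix.one_mul]
  have hc2 : ∀ X : Matrix (Fin N) (Fin N) ℝ, Di * (D * X) = X := fun X => by
    rw [← Matrix.mul_assoc, hDiD, Matrix.one_mul]
  have hAt : ∀ A : Matrix (Fin N) (Fin N) ℝ, Aᵀ * D + D * A = 0 →
      Aᵀ = -(D * (A * Di)) := by
    intro A hA
    have h1 : Aᵀ * D = -(D * A) := eq_neg_of_add_eq_zero_left hA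
    calc Aᵀ = Aᵀ * (D * Di) := by rw [hDDi, Matrix.mul_one]
    _ = (Aᵀ * D) * Di := by rw [Matrix.mul_assoc]
    _ = -(D * A) * Di := by rw [h1]
    _ = -(D * (A * Di)) := by rw [Matrix.neg_mul, Matrix.mul_assoc]
  have h1 := hAt A₁ hA₁a
  have h2 := hAt A₂ hA₂a
  -- antisymmetry of E
  have hanti : Eᵀ = -E := by
    rw [hEdef]
    simp only [Matrix.transpose_add, Matrix.transpose_smul, Matrix.transpose_sub,
      Matrix.transpose_mul, hDt, hDit, h1, h2, hF₁, hF₂]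
    simp only [Matrix.mul_neg, Matrix.neg_mul, Matrix.mul_sub, Matrix.sub_mul,
      Matrix.mul_add, Matrix.add_mul, Matrix.mul_assoc, hc1, hc2, hDDi, hDiD,
      Matrix.mul_one, neg_neg, neg_sub, smul_neg, sub_neg_eq_add, smul_sub, smul_add]
    module
  have hEa : ∀ i j, E j i = -(E i j) := by
    intro i j
    have := congrFun (congrFun hanti i) j
    simpa [Matrix.transpose_apply, Matrix.neg_apply] using this
  -- E*D identity
  have hEDM : E * D = ((1 : ℝ) / 2) • (M - Di * Mᵀ * D) := by
    rw [hEdef, hMdef]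
    simp only [Matrix.transpose_mul, Matrix.transpose_sub, Matrix.transpose_add,
      Matrix.transpose_smul, hDt, hDit, h1, h2, hF₁, hF₂]
    simp only [Matrix.mul_neg, Matrix.neg_mul, Matrix.mul_sub, Matrix.sub_mul,
      Matrix.mul_add, Matrix.add_mul, Matrix.mul_assoc, Matrix.smul_mul, Matrix.mul_smul,
      smul_sub, smul_add, hc1, hc2, hDDi, hDiD, Matrix.mul_one, neg_neg, neg_sub,
      smul_neg, sub_neg_eq_add, smul_smul]
    module
  -- trace identity
  have htr : ∀ B : Matrix (Fin N) (Fin N) ℝ, Bᵀ * D + D * B = 0 →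
      B *ᵥ (1 : Fin N → ℝ) = 0 → (∀ i j, ¬G.Adj i j → B i j = 0) →
      Matrix.trace ((E * D) * B) = 0 := by
    intro B hB hBr hBs
    have hDB : D * B = -(Bᵀ * D) :=
      eq_neg_of_add_eq_zero_left (by linear_combination (norm := abel) hB)
    have h2' : Matrix.trace (Di * Mᵀ * D * B) = -Matrix.trace (M * B) := by
      calc Matrix.trace (Di * Mᵀ * D * B) = Matrix.trace (Di * Mᵀ * (D * B)) := by
            rw [Matrix.mul_assoc]
        _ = -Matrix.trace (Di * Mᵀ * (Bᵀ * D)) := by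
            rw [hDB]; simp [Matrix.mul_assoc]
        _ = -Matrix.trace ((Di * Mᵀ * Bᵀ) * D) := by simp only [Matrix.mul_assoc]
        _ = -Matrix.trace (D * (Di * Mᵀ * Bᵀ)) := by rw [Matrix.trace_mul_comm]
        _ = -Matrix.trace (Mᵀ * Bᵀ) := by
            rw [show D * (Di * Mᵀ * Bᵀ) = Mᵀ * Bᵀ by
              rw [Matrix.mul_assoc Di, ← Matrix.mul_assoc D, hDDi, Matrix.one_mul]]
        _ = -Matrix.trace ((B * M)ᵀ) := by rw [Matrix.transpose_mul]
        _ = -Matrix.trace (B * M) := by rw [Matrix.trace_transpose]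
        _ = -Matrix.trace (M * B) := by rw [Matrix.trace_mul_comm]
    have hMB : Matrix.trace (M * B) = 0 := hEL B hB hBr hBs
    rw [hEDM, Matrix.smul_mul, Matrix.trace_smul, Matrix.sub_mul, Matrix.trace_sub, h2',
      hMB, smul_eq_mul]
    ring
  -- the Euclidean space part
  set e : EuclideanSpace ℝ (Fin N × Fin N) :=
    WithLp.toLp 2 (fun q => if G.Adj q.1 q.2 then E q.1 q.2 else 0 : Fin N × Fin N → ℝ) with hedef
  have hip : ∀ x y : EuclideanSpace ℝ (Fin N × Fin N),
      ⟪x, y⟫ = ∑ i, ∑ j, x (i, j) * y (i, j) := by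
    intro x y
    rw [PiLp.inner_apply]
    simp only [RCLike.inner_apply, starRingEnd_apply, star_trivial]
    rw [Fintype.sum_prod_type]
    exact Finset.sum_congr rfl fun i _ => Finset.sum_congr rfl fun j _ => mul_comm _ _
  have hmem : e ∈ LinearMap.range (gmap' G) := by
    apply mem_range_of_orth'
    intro v hv
    have hv' : ∀ p : Fin N → ℝ,
        ∑ i, ∑ j, (if G.Adj i j then p i - p j else 0) * v (i, j) = 0 := by
      intro p
      have h := hv p
      rw [hip] at h
      simpa [gmap'_apply] using h
    -- divergence freeness
    have hdiv : ∀ i₀ : Fin N,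
        ∑ j, (if G.Adj i₀ j then v (i₀, j) - v (j, i₀) else 0) = 0 := by
      intro i₀
      have h := hv' (fun k => if k = i₀ then (1:ℝ) else 0)
      have hsplit : ∀ i j : Fin N,
          (if G.Adj i j then (if i = i₀ then (1:ℝ) else 0) - (if j = i₀ then 1 else 0)
            else 0) * v (i, j)
          = (if i = i₀ then (if G.Adj i j then v (i, j) else 0) else 0)
            - (if j = i₀ then (if G.Adj i j then v (i, j) else 0) else 0) := by
        intro i j
        by_cases ha : G.Adj i j <;> by_cases hi : i = i₀ <;> by_cases hj : j = i₀ <;>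
          simp [ha, hi, hj, apply_ite (fun z : ℝ => -z)]
      simp only [hsplit, Finset.sum_sub_distrib] at h
      have t1 : ∑ i, ∑ j, (if i = i₀ then (if G.Adj i j then v (i, j) else 0) else 0)
          = ∑ j, (if G.Adj i₀ j then v (i₀, j) else 0) := by
        rw [Finset.sum_eq_single i₀]
        · simp
        · intro b _ hb; simp [hb]
        · intro hh; exact absurd (Finset.mem_univ i₀) hh
      have t2 : ∀ i : Fin N, ∑ j, (if j = i₀ then (if G.Adj i j then v (i, j) else 0) else 0)
          = (if G.Adj i i₀ then v (i, i₀) else 0) := by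
        intro i
        simp [Finset.sum_ite_eq']
      rw [t1] at h
      simp only [t2] at h
      -- h : ∑ j, (if adj i₀ j then v (i₀,j) else 0) - ∑ i, (if adj i i₀ then v (i,i₀) else 0) = 0
      have hrw : ∑ x, (if G.Adj x i₀ then v (x, i₀) else 0)
          = ∑ j, (if G.Adj i₀ j then v (j, i₀) else 0) := by
        apply Finset.sum_congr rfl
        intro x _
        rw [G.adj_comm]
      rw [hrw] at h
      rw [show (fun j => if G.Adj i₀ j then v (i₀, j) - v (j, i₀) else 0)
        = fun j => (if G.Adj i₀ j then v (i₀, j) else 0)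
            - (if G.Adj i₀ j then v (j, i₀) else 0) from
        funext fun j => by by_cases ha : G.Adj i₀ j <;> simp [ha]]
      rw [Finset.sum_sub_distrib]
      linarith [h]
    -- build B
    set B : Matrix (Fin N) (Fin N) ℝ :=
      Matrix.of (fun i j => if G.Adj i j then (d i)⁻¹ * (v (i, j) - v (j, i)) else 0)
      with hBdef
    have hBs : ∀ i j, ¬G.Adj i j → B i j = 0 := by
      intro i j h
      simp [hBdef, h]
    have hBa : Bᵀ * D + D * B = 0 := by
      rw [hDdef]
      ext i j
      simp only [Matrix.add_apply, Matrix.mul_diagonal, Matrix.diagonal_mul,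
        Matrix.transpose_apply, Matrix.zero_apply, hBdef, Matrix.of_apply]
      by_cases ha : G.Adj i j
      · have ha' : G.Adj j i := ha.symm
        simp only [ha, ha', if_true]
        field_simp [hd0 i, hd0 j]
        ring
      · have ha' : ¬G.Adj j i := fun hh => ha hh.symm
        simp [ha, ha']
    have hBr : B *ᵥ (1 : Fin N → ℝ) = 0 := by
      funext i
      simp only [Matrix.mulVec, dotProduct, Pi.one_apply, mul_one, Pi.zero_apply,
        hBdef, Matrix.of_apply]
      have := hdiv i
      rw [show (fun j => if G.Adj i j then (d i)⁻¹ * (v (i, j) - v (j, i)) else 0)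
        = fun j => (d i)⁻¹ * (if G.Adj i j then v (i, j) - v (j, i) else 0) from
        funext fun j => by by_cases ha : G.Adj i j <;> simp [ha]]
      rw [← Finset.mul_sum, this, mul_zero]
    have htr0 : Matrix.trace ((E * D) * B) = 0 := htr B hBa hBr hBs
    -- compute the trace as a sum
    have htrsum : Matrix.trace ((E * D) * B)
        = ∑ i, ∑ j, (if G.Adj i j then E i j * (v (j, i) - v (i, j)) else 0) := by
      rw [Matrix.trace]
      have hdiag : ∀ i, ((E * D) * B).diag i = ∑ j, (E i j * d j) * B j i := by
        intro i
        rw [Matrix.diag_apply, Matrix.mul_apply]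
        apply Finset.sum_congr rfl
        intro j _
        congr 1
        rw [hDdef, Matrix.mul_diagonal]
      simp only [hdiag]
      apply Finset.sum_congr rfl
      intro i _
      apply Finset.sum_congr rfl
      intro j _
      rw [hBdef]
      by_cases ha : G.Adj i j
      · have ha' : G.Adj j i := ha.symm
        simp only [Matrix.of_apply, ha, ha', if_true]
        field_simp [hd0 j]
      · have ha' : ¬G.Adj j i := fun hh => ha hh.symm
        simp [ha, ha']
    -- relate to inner product
    have hswap : ∑ i, ∑ j, (if G.Adj i j then E i j * v (j, i) else 0)
        = ∑ i, ∑ j, (if G.Adj i j then -(E i j) * v (i, j) else 0) := by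
      rw [Finset.sum_comm]
      apply Finset.sum_congr rfl
      intro i _
      apply Finset.sum_congr rfl
      intro j _
      by_cases ha : G.Adj i j
      · have ha' : G.Adj j i := ha.symm
        rw [if_pos ha', if_pos ha, hEa j i]
        ring
      · have ha' : ¬G.Adj j i := fun hh => ha hh.symm
        simp [ha, ha']
    have hfinal : ∑ i, ∑ j, (if G.Adj i j then E i j * v (i, j) else 0) = 0 := by
      have hsum : ∑ i, ∑ j, (if G.Adj i j then E i j * (v (j, i) - v (i, j)) else 0)
          = (∑ i, ∑ j, (if G.Adj i j then E i j * v (j, i) else 0))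
            - (∑ i, ∑ j, (if G.Adj i j then E i j * v (i, j) else 0)) := by
        rw [← Finset.sum_sub_distrib]
        apply Finset.sum_congr rfl
        intro i _
        rw [← Finset.sum_sub_distrib]
        apply Finset.sum_congr rfl
        intro j _
        by_cases ha : G.Adj i j <;> simp [ha] <;> ring
      rw [htrsum, hsum, hswap] at htr0
      have : ∀ i j, (if G.Adj i j then -(E i j) * v (i, j) else 0)
          = -(if G.Adj i j then E i j * v (i, j) else 0) := by
        intro i j; by_cases ha : G.Adj i j <;> simp [ha]
      simp only [this, Finset.sum_neg_distrib] at htr0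
      linarith [htr0]
    rw [hip]
    rw [← hfinal]
    apply Finset.sum_congr rfl
    intro i _
    apply Finset.sum_congr rfl
    intro j _
    rw [hedef]
    by_cases ha : G.Adj i j <;> simp [ha] <;> ring
  obtain ⟨p, hp⟩ := hmem
  refine ⟨p, fun i j hij => ?_⟩
  have h : gmap' G p (i, j) = e (i, j) := by rw [hp]
  rw [gmap'_apply] at h
  rw [hedef] at h
  simp only [PiLp.toLp_apply, if_pos hij] at h
  -- h : p i - p j = E i j
  rw [hEdef] at h ⊢
  linarith [h]
end
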